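/- Let $\mathcal{C}$ be an abelian category and $X$ an exact, locally nilpotent endofunctor. Define $\operatorname{Kopf}_X\colon \mathcal{C}^{T(X)} \to \mathcal{C}$ by $\mathsf{M} \mapsto \operatorname{coker}(h_{\mathsf{M}})$ and $S\colon \mathcal{C} \to \mathcal{C}^{T(X)}$ by $M \mapsto (X(M) \xrightarrow{0} M)$. Then: (1) $\operatorname{Kopf}_X$ is left adjoint to $S$; (2) $\operatorname{Kopf}_X f_!(M) \cong M$ naturally in $M$; (3) if $\operatorname{Kopf}_X(\mathsf{M}) = 0$ then $\mathsf{M} = 0$. -/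

import Mathlib

open CategoryTheory Limits

universe v u

variable {C : Type u} [Category.{v} C]

/-- The power `X^n` of an endofunctor, with `X^(n+1) = X^n ⋙ X`. -/
def fpow (X : C ⥤ C) : ℕ → (C ⥤ C)
  | 0 => 𝟭 C
  | n + 1 => fpow X n ⋙ X

/-- `X` is locally nilpotent if every object is annihilated by some power of `X`. -/
def LocallyNilpotent (X : C ⥤ C) : Prop :=
  ∀ M : C, ∃ n : ℕ, IsZero ((fpow X n).obj M)

/-- The category `(X ⇓ Id)` of `X`-modules, identified with the Eilenberg–Moore category
of the free monad on `X`. -/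
structure XMod (X : C ⥤ C) : Type max u v where
  carrier : C
  str : X.obj carrier ⟶ carrier

/-- Morphisms of `X`-modules. -/
@[ext]
structure XModHom {X : C ⥤ C} (M N : XMod X) : Type v where
  hom : M.carrier ⟶ N.carrier
  comm : M.str ≫ hom = X.map hom ≫ N.str

instance (X : C ⥤ C) : Category (XMod X) where
  Hom := XModHom
  id M := ⟨𝟙 M.carrier, by simp⟩
  comp f g := ⟨f.hom ≫ g.hom, by
    rw [← Category.assoc, f.comm, Category.assoc, g.comm, ← Category.assoc, ← Functor.map_comp]⟩
  id_comp f := by apply XModHom.ext; simp [CategoryStruct.id, CategoryStruct.comp]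
  comp_id f := by apply XModHom.ext; simp [CategoryStruct.id, CategoryStruct.comp]
  assoc f g h := by apply XModHom.ext; simp [CategoryStruct.comp]

@[simp] lemma XMod.id_hom {X : C ⥤ C} (M : XMod X) : (𝟙 M : XModHom M M).hom = 𝟙 M.carrier := rfl
@[simp] lemma XMod.comp_hom {X : C ⥤ C} {M N P : XMod X} (f : M ⟶ N) (g : N ⟶ P) :
    (f ≫ g).hom = f.hom ≫ g.hom := rfl

/-- `F` is the free `X`-module `f₁(N)` on `N`, encoded via the universal
property of the free–forgetful adjunction `f₁ ⊣ f⋆`. -/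
structure IsFreeXModOn (X : C ⥤ C) (F : XMod X) (N : C) where
  unit : N ⟶ F.carrier
  lift : ∀ (P : XMod X), (N ⟶ P.carrier) → (F ⟶ P)
  fac : ∀ (P : XMod X) (g : N ⟶ P.carrier), unit ≫ (lift P g).hom = g
  uniq : ∀ (P : XMod X) (g : N ⟶ P.carrier) (k : F ⟶ P), unit ≫ k.hom = g → k = lift P g

variable [Abelian C] (X : C ⥤ C)

/-- The top functor `Kopf_X : 𝒞^{T(X)} ⥤ 𝒞`, sending a module to the cokernel of its
structure map. -/
noncomputable def KopfFunctor : XMod X ⥤ C where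
  obj M := cokernel M.str
  map {M N} f := cokernel.map M.str N.str (X.map f.hom) f.hom f.comm
  map_id M := by
    apply coequalizer.hom_ext
    simp [cokernel.map]
  map_comp f g := by
    apply coequalizer.hom_ext
    simp [cokernel.map]

/-- The functor `S : 𝒞 ⥤ 𝒞^{T(X)}` endowing an object with the zero structure map. -/
def SFunctor : C ⥤ XMod X where
  obj M := ⟨M, 0⟩
  map f := ⟨f, by simp⟩
  map_id M := by apply XModHom.ext; rfl
  map_comp f g := by apply XModHom.ext; rfl

noncomputable def kopfAdj : KopfFunctor X ⊣ SFunctor X :=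
  Adjunction.mkOfHomEquiv
  { homEquiv := fun M N =>
      { toFun := fun (k : cokernel M.str ⟶ N) => ⟨cokernel.π M.str ≫ k, by
          dsimp [SFunctor]
          rw [← Category.assoc, cokernel.condition, zero_comp, comp_zero]⟩
        invFun := fun g => cokernel.desc M.str g.hom (by
          have := g.comm; dsimp [SFunctor] at this; rw [comp_zero] at this; exact this)
        left_inv := fun k => by apply coequalizer.hom_ext; exact cokernel.π_desc _ _ _
        right_inv := fun g => by apply XModHom.ext; exact cokernel.π_desc _ _ _ }
    homEquiv_naturality_left_symm := fun f g => by
      apply coequalizer.hom_ext; simp [KopfFunctor]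
      erw [cokernel.π_desc, cokernel.π_desc]; rfl
    homEquiv_naturality_right := fun f g => by
      apply XModHom.ext; simp [SFunctor]
      exact (Category.assoc _ _ _).symm }

/-- iterated structure map `X^n M ⟶ M`. -/
def strPow {X : C ⥤ C} (M : XMod X) : ∀ n : ℕ, (fpow X n).obj M.carrier ⟶ M.carrier
  | 0 => 𝟙 M.carrier
  | n + 1 => X.map (strPow M n) ≫ M.str

/-- Let `C` be abelian and `X` exact and locally nilpotent. Then
(1) `Kopf_X` is left adjoint to `S`; (2) the canonical map `M ⟶ Kopf_X (f₁ M)` is an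
isomorphism for every free module `f₁(M)`; and (3) if `Kopf_X M = 0` then `M = 0`. -/
theorem kopf_adjunction_and_properties
    [PreservesFiniteLimits X] [PreservesFiniteColimits X]
    (hX : LocallyNilpotent X) :
    Nonempty (KopfFunctor X ⊣ SFunctor X) ∧
    (∀ (M : C) (F : XMod X) (h : IsFreeXModOn X F M), IsIso (h.unit ≫ cokernel.π F.str)) ∧
    (∀ M : XMod X, IsZero (cokernel M.str) → IsZero M.carrier) := by
  refine ⟨⟨kopfAdj X⟩, ?_, ?_⟩
  · intro M F h
    set l := h.lift ((SFunctor X).obj M) (𝟙 M) with hl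
    have hl0 : F.str ≫ l.hom = 0 := by
      have := l.comm; dsimp [SFunctor] at this; rw [comp_zero] at this; exact this
    refine ⟨cokernel.desc F.str l.hom hl0, ?_, ?_⟩
    · erw [Category.assoc, cokernel.π_desc, h.fac]
    · apply coequalizer.hom_ext
      erw [← Category.assoc, cokernel.π_desc, Category.comp_id]
      have c1 : F.str ≫ (l.hom ≫ h.unit ≫ cokernel.π F.str) = 0 := by
        rw [← Category.assoc, hl0, zero_comp]
      have c2 : F.str ≫ cokernel.π F.str = 0 := cokernel.condition _
      have e1 : (⟨l.hom ≫ h.unit ≫ cokernel.π F.str, by dsimp [SFunctor]; exact c1.trans comp_zero.symm⟩ :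
          XModHom F ((SFunctor X).obj (cokernel F.str)))
          = h.lift _ (h.unit ≫ cokernel.π F.str) := by
        apply h.uniq
        show h.unit ≫ l.hom ≫ _ = _
        erw [← Category.assoc, h.fac, Category.id_comp]
        rfl
      have e2 : (⟨cokernel.π F.str, by dsimp [SFunctor]; rw [c2, comp_zero]⟩ :
          XModHom F ((SFunctor X).obj (cokernel F.str)))
          = h.lift _ (h.unit ≫ cokernel.π F.str) := by
        apply h.uniq; rfl
      have key := congrArg XModHom.hom (e1.trans e2.symm)
      simp only at key
      exact key
  · intro M hz
    have hepi : Epi M.str :=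
      Abelian.epi_of_cokernel_π_eq_zero _ (hz.eq_zero_of_tgt _)
    have hpow : ∀ n, Epi (strPow M n) := by
      intro n
      induction n with
      | zero => exact inferInstanceAs (Epi (𝟙 M.carrier))
      | succ n ih =>
        have : Epi (X.map (strPow M n)) := X.map_epi _
        exact epi_comp' this hepi
    obtain ⟨n, hn⟩ := hX M.carrier
    have := hpow n
    exact IsZero.of_epi (strPow M n) hn
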